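/- Skeletal 2-term Dend_∞-algebras (A_1 →^{d=0} A_0, μ_2, μ_3) are in one-to-one correspondence with tuples (A, M, θ_1, θ_2, σ) where A is a dendriform algebra, (M, θ_1, θ_2) is a representation of A, and σ ∈ Hom(K[C_3] ⊗ A^{⊗3}, M) is a 3-cocycle of A with coefficients in M. -/
import Mathlib


universe u

section

variable (K : Type u) [Field K] (A0 A1 : Type u)
  [AddCommGroup A0] [Module K A0] [AddCommGroup A1] [Module K A1]

/-- A 2-term `Dend_∞`-algebra on the chain complex `A1 → A0`.  The binary
bracket `μ₂` has components `x0, x1 : A0 ⊗ A0 → A0` (labels `[1], [2]`),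
`l0, l1 : A0 ⊗ A1 → A1` and `r0, r1 : A1 ⊗ A0 → A1`; the ternary bracket
`μ₃` has components `s0, s1, s2 : A0^{⊗3} → A1` (labels `[1], [2], [3]`).
The fields `cii`–`cvii` are the conditions (ii)–(vii) of the definition,
written out at each label (the composition `∘ᵢ` uses the combinatorial maps
`R₀, Rᵢ` of the dendriform operad). -/
structure TwoTermDendInfty where
  d : A1 →ₗ[K] A0
  x0 : A0 →ₗ[K] A0 →ₗ[K] A0
  x1 : A0 →ₗ[K] A0 →ₗ[K] A0
  l0 : A0 →ₗ[K] A1 →ₗ[K] A1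
  l1 : A0 →ₗ[K] A1 →ₗ[K] A1
  r0 : A1 →ₗ[K] A0 →ₗ[K] A1
  r1 : A1 →ₗ[K] A0 →ₗ[K] A1
  s0 : A0 →ₗ[K] A0 →ₗ[K] A0 →ₗ[K] A1
  s1 : A0 →ₗ[K] A0 →ₗ[K] A0 →ₗ[K] A1
  s2 : A0 →ₗ[K] A0 →ₗ[K] A0 →ₗ[K] A1
  cii0 : ∀ a m, d (l0 a m) = x0 a (d m)
  cii1 : ∀ a m, d (l1 a m) = x1 a (d m)
  ciii0 : ∀ m a, d (r0 m a) = x0 (d m) a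
  ciii1 : ∀ m a, d (r1 m a) = x1 (d m) a
  civ0 : ∀ m n, l0 (d m) n = r0 m (d n)
  civ1 : ∀ m n, l1 (d m) n = r1 m (d n)
  cv0 : ∀ a b c, x0 (x0 a b) c - x0 a (x0 b c + x1 b c) = d (s0 a b c)
  cv1 : ∀ a b c, x0 (x1 a b) c - x1 a (x0 b c) = d (s1 a b c)
  cv2 : ∀ a b c, x1 (x0 a b + x1 a b) c - x1 a (x1 b c) = d (s2 a b c)
  cvi1_0 : ∀ a b m, l0 (x0 a b) m - l0 a (l0 b m + l1 b m) = s0 a b (d m)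
  cvi1_1 : ∀ a b m, l0 (x1 a b) m - l1 a (l0 b m) = s1 a b (d m)
  cvi1_2 : ∀ a b m, l1 (x0 a b + x1 a b) m - l1 a (l1 b m) = s2 a b (d m)
  cvi2_0 : ∀ a m c, r0 (l0 a m) c - l0 a (r0 m c + r1 m c) = s0 a (d m) c
  cvi2_1 : ∀ a m c, r0 (l1 a m) c - l1 a (r0 m c) = s1 a (d m) c
  cvi2_2 : ∀ a m c, r1 (l0 a m + l1 a m) c - l1 a (r1 m c) = s2 a (d m) c
  cvi3_0 : ∀ m b c, r0 (r0 m b) c - r0 m (x0 b c + x1 b c) = s0 (d m) b c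
  cvi3_1 : ∀ m b c, r0 (r1 m b) c - r1 m (x0 b c) = s1 (d m) b c
  cvi3_2 : ∀ m b c, r1 (r0 m b + r1 m b) c - r1 m (x1 b c) = s2 (d m) b c
  cvii0 : ∀ a b c e,
    s0 (x0 a b) c e - s0 a (x0 b c + x1 b c) e + s0 a b (x0 c e + x1 c e)
      = r0 (s0 a b c) e + l0 a (s0 b c e + s1 b c e + s2 b c e)
  cvii1 : ∀ a b c e,
    s0 (x1 a b) c e - s1 a (x0 b c) e + s1 a b (x0 c e + x1 c e)
      = r0 (s1 a b c) e + l1 a (s0 b c e)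
  cvii2 : ∀ a b c e,
    s1 (x0 a b + x1 a b) c e - s1 a (x1 b c) e + s2 a b (x0 c e)
      = r0 (s2 a b c) e + l1 a (s1 b c e)
  cvii3 : ∀ a b c e,
    s2 (x0 a b + x1 a b) c e - s2 a (x0 b c + x1 b c) e + s2 a b (x1 c e)
      = r1 (s0 a b c + s1 a b c + s2 a b c) e + l1 a (s2 b c e)

/-- A tuple `(A, M, θ₁, θ₂, σ)`: a dendriform algebra structure `(p0, p1)` on
`A0`, a representation `(t10, t11, t20, t21)` of it on `A1`, and a 3-cocycle
`σ = (σ0, σ1, σ2) ∈ Hom(K[C₃] ⊗ A^{⊗3}, M)`, `δ_dend σ = 0` (the four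
`cocycle` conditions, one for each label of `C₄`). -/
structure DendRep3Cocycle where
  p0 : A0 →ₗ[K] A0 →ₗ[K] A0
  p1 : A0 →ₗ[K] A0 →ₗ[K] A0
  hd1 : ∀ a b c, p0 (p0 a b) c = p0 a (p0 b c + p1 b c)
  hd2 : ∀ a b c, p0 (p1 a b) c = p1 a (p0 b c)
  hd3 : ∀ a b c, p1 (p0 a b + p1 a b) c = p1 a (p1 b c)
  t10 : A0 →ₗ[K] A1 →ₗ[K] A1
  t11 : A0 →ₗ[K] A1 →ₗ[K] A1
  t20 : A1 →ₗ[K] A0 →ₗ[K] A1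
  t21 : A1 →ₗ[K] A0 →ₗ[K] A1
  rep1 : ∀ a b m, t10 (p0 a b) m = t10 a (t10 b m + t11 b m)
  rep2 : ∀ a b m, t10 (p1 a b) m = t11 a (t10 b m)
  rep3 : ∀ a b m, t11 (p0 a b + p1 a b) m = t11 a (t11 b m)
  rep4 : ∀ a m c, t20 (t10 a m) c = t10 a (t20 m c + t21 m c)
  rep5 : ∀ a m c, t20 (t11 a m) c = t11 a (t20 m c)
  rep6 : ∀ a m c, t21 (t10 a m + t11 a m) c = t11 a (t21 m c)
  rep7 : ∀ m b c, t20 (t20 m b) c = t20 m (p0 b c + p1 b c)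
  rep8 : ∀ m b c, t20 (t21 m b) c = t21 m (p0 b c)
  rep9 : ∀ m b c, t21 (t20 m b + t21 m b) c = t21 m (p1 b c)
  σ0 : A0 →ₗ[K] A0 →ₗ[K] A0 →ₗ[K] A1
  σ1 : A0 →ₗ[K] A0 →ₗ[K] A0 →ₗ[K] A1
  σ2 : A0 →ₗ[K] A0 →ₗ[K] A0 →ₗ[K] A1
  cocycle0 : ∀ a b c e,
    σ0 (p0 a b) c e - σ0 a (p0 b c + p1 b c) e + σ0 a b (p0 c e + p1 c e)
      = t20 (σ0 a b c) e + t10 a (σ0 b c e + σ1 b c e + σ2 b c e)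
  cocycle1 : ∀ a b c e,
    σ0 (p1 a b) c e - σ1 a (p0 b c) e + σ1 a b (p0 c e + p1 c e)
      = t20 (σ1 a b c) e + t11 a (σ0 b c e)
  cocycle2 : ∀ a b c e,
    σ1 (p0 a b + p1 a b) c e - σ1 a (p1 b c) e + σ2 a b (p0 c e)
      = t20 (σ2 a b c) e + t11 a (σ1 b c e)
  cocycle3 : ∀ a b c e,
    σ2 (p0 a b + p1 a b) c e - σ2 a (p0 b c + p1 b c) e + σ2 a b (p1 c e)
      = t21 (σ0 a b c + σ1 a b c + σ2 a b c) e + t11 a (σ2 b c e)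

end

/-- skeletal 2-term `Dend_∞`-algebras (`d = 0`) are in
one-to-one correspondence with tuples `(A, M, θ₁, θ₂, σ)` consisting of a
dendriform algebra `A`, a representation `(M, θ₁, θ₂)` of it, and a 3-cocycle
`σ` of `A` with coefficients in `M`. -/
theorem skeletal_classification
    {K : Type u} [Field K] {A0 A1 : Type u}
    [AddCommGroup A0] [Module K A0] [AddCommGroup A1] [Module K A1] :
    Nonempty
      ({X : TwoTermDendInfty K A0 A1 // X.d = 0} ≃ DendRep3Cocycle K A0 A1) := by
  
  refine ⟨{ toFun := fun X => ?_, invFun := fun Y => ?_, left_inv := ?_, right_inv := ?_ }⟩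
  · exact
    { p0 := X.1.x0, p1 := X.1.x1
      hd1 := fun a b c => by have := X.1.cv0 a b c; rw [X.2] at this; simpa [sub_eq_zero] using this
      hd2 := fun a b c => by have := X.1.cv1 a b c; rw [X.2] at this; simpa [sub_eq_zero] using this
      hd3 := fun a b c => by have := X.1.cv2 a b c; rw [X.2] at this; simpa [sub_eq_zero] using this
      t10 := X.1.l0, t11 := X.1.l1, t20 := X.1.r0, t21 := X.1.r1
      rep1 := fun a b m => by have := X.1.cvi1_0 a b m; rw [X.2] at this; simpa [sub_eq_zero] using this
      rep2 := fun a b m => by have := X.1.cvi1_1 a b m; rw [X.2] at this; simpa [sub_eq_zero] using this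
      rep3 := fun a b m => by have := X.1.cvi1_2 a b m; rw [X.2] at this; simpa [sub_eq_zero] using this
      rep4 := fun a m c => by have := X.1.cvi2_0 a m c; rw [X.2] at this; simpa [sub_eq_zero] using this
      rep5 := fun a m c => by have := X.1.cvi2_1 a m c; rw [X.2] at this; simpa [sub_eq_zero] using this
      rep6 := fun a m c => by have := X.1.cvi2_2 a m c; rw [X.2] at this; simpa [sub_eq_zero] using this
      rep7 := fun m b c => by have := X.1.cvi3_0 m b c; rw [X.2] at this; simpa [sub_eq_zero] using this
      rep8 := fun m b c => by have := X.1.cvi3_1 m b c; rw [X.2] at this; simpa [sub_eq_zero] using this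
      rep9 := fun m b c => by have := X.1.cvi3_2 m b c; rw [X.2] at this; simpa [sub_eq_zero] using this
      σ0 := X.1.s0, σ1 := X.1.s1, σ2 := X.1.s2
      cocycle0 := X.1.cvii0, cocycle1 := X.1.cvii1
      cocycle2 := X.1.cvii2, cocycle3 := X.1.cvii3 }
  · refine ⟨{
      d := 0
      x0 := Y.p0, x1 := Y.p1, l0 := Y.t10, l1 := Y.t11, r0 := Y.t20, r1 := Y.t21
      s0 := Y.σ0, s1 := Y.σ1, s2 := Y.σ2
      cii0 := by simp
      cii1 := by simp
      ciii0 := by simp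
      ciii1 := by simp
      civ0 := by simp
      civ1 := by simp
      cv0 := fun a b c => by simpa [sub_eq_zero] using Y.hd1 a b c
      cv1 := fun a b c => by simpa [sub_eq_zero] using Y.hd2 a b c
      cv2 := fun a b c => by simpa [sub_eq_zero] using Y.hd3 a b c
      cvi1_0 := fun a b m => by simpa [sub_eq_zero] using Y.rep1 a b m
      cvi1_1 := fun a b m => by simpa [sub_eq_zero] using Y.rep2 a b m
      cvi1_2 := fun a b m => by simpa [sub_eq_zero] using Y.rep3 a b m
      cvi2_0 := fun a m c => by simpa [sub_eq_zero] using Y.rep4 a m c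
      cvi2_1 := fun a m c => by simpa [sub_eq_zero] using Y.rep5 a m c
      cvi2_2 := fun a m c => by simpa [sub_eq_zero] using Y.rep6 a m c
      cvi3_0 := fun m b c => by simpa [sub_eq_zero] using Y.rep7 m b c
      cvi3_1 := fun m b c => by simpa [sub_eq_zero] using Y.rep8 m b c
      cvi3_2 := fun m b c => by simpa [sub_eq_zero] using Y.rep9 m b c
      cvii0 := Y.cocycle0, cvii1 := Y.cocycle1
      cvii2 := Y.cocycle2, cvii3 := Y.cocycle3 }, rfl⟩
  · rintro ⟨X, hX⟩
    apply Subtype.ext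
    obtain ⟨d, x0, x1, l0, l1, r0, r1, s0, s1, s2, _, _, _, _, _, _, _, _, _, _,
      _, _, _, _, _, _, _, _, _, _, _, _⟩ := X
    obtain rfl : d = 0 := hX
    rfl
  · rintro Y
    cases Y
    rfl
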